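/- For all expectations X, Y and the heap-size expectation size(s,h) = |dom(h)|, the inequality (X ⋆ Y) · size ≼ (X · size) ⋆ Y + X ⋆ (Y · size) holds; moreover, if X or Y is domain-exact, this inequality is an equality. -/

import Mathlib

open scoped ENNReal

abbrev Stack : Type := ℕ → ℤ
abbrev Heap : Type := Finmap (fun _ : ℕ+ => ℤ)
abbrev Exp : Type := Stack × Heap → ℝ≥0∞

/-- Quantitative separating conjunction: supremum (= maximum, as the set of
partitions of a finite heap is finite and nonempty) over all splittings of the
heap into two disjoint parts. -/
noncomputable def sepCon (X Y : Exp) : Exp := fun sh =>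
  ⨆ (h₁ : Heap) (h₂ : Heap) (_ : h₁.Disjoint h₂) (_ : sh.2 = h₁ ∪ h₂),
    X (sh.1, h₁) * Y (sh.1, h₂)

open Classical in
noncomputable def iv (φ : Stack × Heap → Prop) : Exp :=
  fun sh => if φ sh then 1 else 0

noncomputable def size : Exp := fun sh => (sh.2.keys.card : ℝ≥0∞)

def DomExact (X : Exp) : Prop :=
  ∀ (s : Stack) (h h' : Heap), 0 < X (s, h) → 0 < X (s, h') → h.keys = h'.keys

lemma keys_card_union {h₁ h₂ : Heap} (hd : h₁.Disjoint h₂) :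
    (h₁ ∪ h₂).keys.card = h₁.keys.card + h₂.keys.card := by
  rw [Finmap.keys_union, Finset.card_union_of_disjoint (Finset.disjoint_left.mpr
    (fun a ha => by
      simp only [Finmap.mem_keys] at ha ⊢
      exact hd a ha))]

lemma sepCon_term_le (X Y : Exp) (s : Stack) (h h₁ h₂ : Heap) (hd : h₁.Disjoint h₂)
    (he : h = h₁ ∪ h₂) : X (s, h₁) * Y (s, h₂) ≤ sepCon X Y (s, h) :=
  le_iSup_of_le h₁ (le_iSup_of_le h₂ (le_iSup_of_le hd (le_iSup_of_le he le_rfl)))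

lemma sepCon_le_swap (X Y : Exp) : sepCon X Y ≤ sepCon Y X := by
  intro sh
  refine iSup_le fun h₁ => iSup_le fun h₂ => iSup_le fun hd => iSup_le fun he => ?_
  rw [mul_comm]
  exact sepCon_term_le Y X sh.1 sh.2 h₂ h₁ hd.symm
    (he.trans (Finmap.union_comm_of_disjoint hd))

lemma sepCon_comm (X Y : Exp) : sepCon X Y = sepCon Y X :=
  le_antisymm (sepCon_le_swap X Y) (sepCon_le_swap Y X)

lemma sepCon_le (X Y : Exp) :
    sepCon X Y * size ≤ sepCon (X * size) Y + sepCon X (Y * size) := by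
  intro sh
  obtain ⟨s, h⟩ := sh
  simp only [Pi.mul_apply, Pi.add_apply, sepCon, ENNReal.iSup_mul]
  refine iSup_le fun h₁ => iSup_le fun h₂ => iSup_le fun hd => iSup_le fun he => ?_
  have hc : (size (s, h) : ℝ≥0∞) = (h₁.keys.card : ℝ≥0∞) + (h₂.keys.card : ℝ≥0∞) := by
    simp only [size]
    rw [he, keys_card_union hd]
    push_cast; ring
  rw [hc, mul_add]
  gcongr
  · refine le_iSup_of_le h₁ (le_iSup_of_le h₂ (le_iSup_of_le hd (le_iSup_of_le he ?_)))
    simp only [Pi.mul_apply, size]; ring_nf; rfl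
  · refine le_iSup_of_le h₁ (le_iSup_of_le h₂ (le_iSup_of_le hd (le_iSup_of_le he ?_)))
    simp only [Pi.mul_apply, size]; ring_nf; rfl

lemma sepCon_ge_of_domExact (X Y : Exp) (hX : DomExact X) :
    sepCon (X * size) Y + sepCon X (Y * size) ≤ sepCon X Y * size := by
  intro sh
  obtain ⟨s, h⟩ := sh
  by_cases hS : sepCon X Y (s, h) = 0
  · have hz : ∀ h₁ h₂ : Heap, h₁.Disjoint h₂ → h = h₁ ∪ h₂ →
        X (s, h₁) * Y (s, h₂) = 0 := by
      simpa [sepCon, ENNReal.iSup_eq_zero] using hS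
    have hA : sepCon (X * size) Y (s, h) = 0 := by
      simp only [sepCon, ENNReal.iSup_eq_zero]
      intro h₁ h₂ hd he
      rcases mul_eq_zero.mp (hz h₁ h₂ hd he) with h0 | h0 <;> simp [Pi.mul_apply, h0]
    have hB : sepCon X (Y * size) (s, h) = 0 := by
      simp only [sepCon, ENNReal.iSup_eq_zero]
      intro h₁ h₂ hd he
      rcases mul_eq_zero.mp (hz h₁ h₂ hd he) with h0 | h0 <;> simp [Pi.mul_apply, h0]
    simp [Pi.add_apply, hA, hB]
  · -- positive case
    obtain ⟨g₁, g₂, gd, ge, gpos⟩ : ∃ g₁ g₂ : Heap, g₁.Disjoint g₂ ∧ h = g₁ ∪ g₂ ∧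
        X (s, g₁) * Y (s, g₂) ≠ 0 := by
      by_contra hc
      push_neg at hc
      apply hS
      simp only [sepCon, ENNReal.iSup_eq_zero]
      intro h₁ h₂ hd he
      exact hc h₁ h₂ hd he
    set k := g₁.keys.card with hk
    set m := g₂.keys.card with hm
    have hckm : h.keys.card = k + m := by rw [ge, keys_card_union gd]
    set S := sepCon X Y (s, h) with hSdef
    have hA : sepCon (X * size) Y (s, h) ≤ (k : ℝ≥0∞) * S := by
      simp only [sepCon, hSdef]
      refine iSup_le fun h₁ => iSup_le fun h₂ => iSup_le fun hd => iSup_le fun he => ?_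
      by_cases h0 : X (s, h₁) * Y (s, h₂) = 0
      · have : (X * size) (s, h₁) * Y (s, h₂) = 0 := by
          rcases mul_eq_zero.mp h0 with h0 | h0 <;> simp [Pi.mul_apply, h0]
        exact le_trans (le_of_eq this) zero_le
      · have hx : 0 < X (s, h₁) := pos_iff_ne_zero.mpr (fun hz => h0 (by simp [hz]))
        have hy : 0 < Y (s, h₂) := pos_iff_ne_zero.mpr (fun hz => h0 (by simp [hz]))
        have hgx : 0 < X (s, g₁) := pos_iff_ne_zero.mpr (fun hz => gpos (by simp [hz]))
        have hkeys : h₁.keys = g₁.keys := hX s h₁ g₁ hx hgx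
        have : (X * size) (s, h₁) * Y (s, h₂) = (k : ℝ≥0∞) * (X (s, h₁) * Y (s, h₂)) := by
          simp only [Pi.mul_apply, size, hkeys]; ring
        rw [this]
        exact mul_le_mul_right (sepCon_term_le X Y s h h₁ h₂ hd he) _
    have hB : sepCon X (Y * size) (s, h) ≤ (m : ℝ≥0∞) * S := by
      simp only [sepCon, hSdef]
      refine iSup_le fun h₁ => iSup_le fun h₂ => iSup_le fun hd => iSup_le fun he => ?_
      by_cases h0 : X (s, h₁) * Y (s, h₂) = 0
      · have : X (s, h₁) * (Y * size) (s, h₂) = 0 := by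
          rcases mul_eq_zero.mp h0 with h0 | h0 <;> simp [Pi.mul_apply, h0]
        exact le_trans (le_of_eq this) zero_le
      · have hx : 0 < X (s, h₁) := pos_iff_ne_zero.mpr (fun hz => h0 (by simp [hz]))
        have hgx : 0 < X (s, g₁) := pos_iff_ne_zero.mpr (fun hz => gpos (by simp [hz]))
        have hkeys : h₁.keys = g₁.keys := hX s h₁ g₁ hx hgx
        have hcard2 : h₂.keys.card = m := by
          have h12 : h₁.keys.card + h₂.keys.card = k + m := by
            rw [← hckm, he, keys_card_union hd]
          have h1 : h₁.keys.card = k := by rw [hkeys]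
          omega
        have : X (s, h₁) * (Y * size) (s, h₂) = (m : ℝ≥0∞) * (X (s, h₁) * Y (s, h₂)) := by
          simp only [Pi.mul_apply, size, hcard2]; ring
        rw [this]
        exact mul_le_mul_right (sepCon_term_le X Y s h h₁ h₂ hd he) _
    calc sepCon (X * size) Y (s, h) + sepCon X (Y * size) (s, h)
        ≤ (k : ℝ≥0∞) * S + (m : ℝ≥0∞) * S := add_le_add hA hB
      _ = S * ((k : ℝ≥0∞) + m) := by ring
      _ = (sepCon X Y * size) (s, h) := by
          simp only [Pi.mul_apply, size, hSdef, hckm]; push_cast; ring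

theorem sepCon_mul_size (X Y : Exp) :
    sepCon X Y * size ≤ sepCon (X * size) Y + sepCon X (Y * size) ∧
      ((DomExact X ∨ DomExact Y) →
        sepCon X Y * size = sepCon (X * size) Y + sepCon X (Y * size)) := by
  refine ⟨sepCon_le X Y, fun hex => le_antisymm (sepCon_le X Y) ?_⟩
  rcases hex with hX | hY
  · exact sepCon_ge_of_domExact X Y hX
  · have := sepCon_ge_of_domExact Y X hY
    rw [sepCon_comm X Y]
    calc sepCon (X * size) Y + sepCon X (Y * size)
        = sepCon Y (X * size) + sepCon (Y * size) X := by
          rw [sepCon_comm (X * size) Y, sepCon_comm X (Y * size)]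
      _ = sepCon (Y * size) X + sepCon Y (X * size) := by abel
      _ ≤ sepCon Y X * size := this
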